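/- Let φ : (0,∞) → (0,∞) be convex and strictly decreasing, and let L₁, K₁, ..., Kₙ be star bodies in ℝⁿ. Define the Orlicz harmonic sum K₁+̂_φL₁ by φ(ρ(K₁,u)/ρ(K₁+̂_φL₁,u)) + φ(ρ(L₁,u)/ρ(K₁+̂_φL₁,u)) = φ(1) for all u. Then φ(1)·Ṽ(K₁+̂_φL₁, K₂,...,Kₙ) = Ṽ_φ(K₁+̂_φL₁, K₁, K₂,...,Kₙ) + Ṽ_φ(K₁+̂_φL₁, L₁, K₂,...,Kₙ). -/

import Mathlib

open MeasureTheory Metric Set Finset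
open scoped NNReal ENNReal

/-- The radial normalization map is 2-Lipschitz outside the unit ball. -/
lemma normalize_lipschitzOnWith {E : Type*} [NormedAddCommGroup E] [NormedSpace ℝ E] :
    LipschitzOnWith 2 (fun x : E => ‖x‖⁻¹ • x) {x : E | 1 ≤ ‖x‖} := by
  rw [lipschitzOnWith_iff_dist_le_mul]
  have key : ∀ x y : E, 1 ≤ ‖x‖ → 1 ≤ ‖y‖ → ‖y‖ ≤ ‖x‖ →
      ‖‖x‖⁻¹ • x - ‖y‖⁻¹ • y‖ ≤ 2 * ‖x - y‖ := by
    intro x y hx hy hyx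
    have hx0 : (0:ℝ) < ‖x‖ := lt_of_lt_of_le one_pos hx
    have hy0 : (0:ℝ) < ‖y‖ := lt_of_lt_of_le one_pos hy
    have hsplit : ‖x‖⁻¹ • x - ‖y‖⁻¹ • y = ‖x‖⁻¹ • (x - y) + (‖x‖⁻¹ - ‖y‖⁻¹) • y := by
      rw [smul_sub, sub_smul]; abel
    rw [hsplit]
    have h1 : ‖‖x‖⁻¹ • (x - y)‖ ≤ ‖x - y‖ := by
      rw [norm_smul, norm_inv, norm_norm]
      have : ‖x‖⁻¹ ≤ 1 := by
        rw [inv_le_one_iff₀]; right; exact hx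
      calc ‖x‖⁻¹ * ‖x - y‖ ≤ 1 * ‖x - y‖ := by
            apply mul_le_mul_of_nonneg_right this (norm_nonneg _)
        _ = ‖x - y‖ := one_mul _
    have h2 : ‖(‖x‖⁻¹ - ‖y‖⁻¹) • y‖ ≤ ‖x - y‖ := by
      rw [norm_smul, Real.norm_eq_abs]
      have hle : ‖x‖⁻¹ ≤ ‖y‖⁻¹ := by
        apply inv_anti₀ hy0 hyx
      rw [abs_of_nonpos (by linarith)]
      have : -(‖x‖⁻¹ - ‖y‖⁻¹) * ‖y‖ = (‖x‖ - ‖y‖) / ‖x‖ * (‖y‖ / ‖y‖) := by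
        field_simp
        ring
      rw [this, div_self hy0.ne', mul_one]
      have hnum : ‖x‖ - ‖y‖ ≤ ‖x - y‖ := by
        have := norm_sub_norm_le x y
        linarith
      calc (‖x‖ - ‖y‖) / ‖x‖ ≤ ‖x - y‖ / ‖x‖ := by
            gcongr
        _ ≤ ‖x - y‖ := by
            rw [div_le_iff₀ hx0]
            nlinarith [norm_nonneg (x - y)]
    calc ‖‖x‖⁻¹ • (x - y) + (‖x‖⁻¹ - ‖y‖⁻¹) • y‖
        ≤ ‖‖x‖⁻¹ • (x - y)‖ + ‖(‖x‖⁻¹ - ‖y‖⁻¹) • y‖ := norm_add_le _ _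
      _ ≤ 2 * ‖x - y‖ := by linarith
  intro x hx y hy
  simp only [mem_setOf_eq] at hx hy
  rcases le_total ‖y‖ ‖x‖ with h | h
  · simpa [dist_eq_norm, NNReal.coe_ofNat] using key x y hx hy h
  · rw [dist_comm, dist_comm x y]
    simpa [dist_eq_norm, NNReal.coe_ofNat] using key y x hy hx h

lemma slice_hausdorff_lt_top (n : ℕ) (hn : 0 < n) (i : Fin n) (c R : ℝ) :
    μH[(n:ℝ)-1] ({x : EuclideanSpace ℝ (Fin n) | x i = c} ∩ closedBall 0 R) < ⊤ := by
  classical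
  set E := EuclideanSpace ℝ (Fin n)
  have hd0 : (0:ℝ) ≤ (n:ℝ) - 1 := by
    have : (1:ℝ) ≤ n := by exact_mod_cast hn
    linarith
  set e : E := EuclideanSpace.single i (1:ℝ) with he
  set v : E := c • e with hv
  -- translation
  have himg : {x : E | x i = c} ∩ closedBall 0 R
      = (fun y : E => y + v) '' ({y : E | y i = 0} ∩ closedBall (-v) R) := by
    ext x
    simp only [Set.mem_image, Set.mem_inter_iff, Set.mem_setOf_eq, mem_closedBall]
    have hvi : v i = c := by
      have h' : v i = c * (EuclideanSpace.single i (1:ℝ)) i := rfl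
      rw [h', EuclideanSpace.single_apply]
      simp
    constructor
    · rintro ⟨hxi, hxb⟩
      refine ⟨x - v, ⟨?_, ?_⟩, by abel⟩
      · show (x - v) i = 0
        have hxv : (x - v) i = x i - v i := rfl
        rw [hxv, hxi, hvi, sub_self]
      · rw [dist_eq_norm]
        simpa [dist_eq_norm, sub_neg_eq_add] using hxb
    · rintro ⟨y, ⟨hyi, hyb⟩, rfl⟩
      constructor
      · have hyv : (y + v) i = y i + v i := rfl
        rw [hyv, hyi, hvi, zero_add]
      · rw [dist_eq_norm] at hyb ⊢
        simpa [sub_neg_eq_add] using hyb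
  rw [himg]
  have hiso : Isometry (fun y : E => y + v) := Isometry.of_dist_eq (by
    intro a b
    simp only [dist_eq_norm, add_sub_add_right_eq_sub])
  rw [hiso.hausdorffMeasure_image (Or.inl hd0)]
  -- now inside the hyperplane submodule
  set fl : E →ₗ[ℝ] ℝ := ((EuclideanSpace.proj (𝕜 := ℝ) i : E →L[ℝ] ℝ) : E →ₗ[ℝ] ℝ) with hfl
  set K : Submodule ℝ E := LinearMap.ker fl with hK
  set A : Set E := {y : E | y i = 0} ∩ closedBall (-v) R with hA
  have hAK : A ⊆ (K : Set E) := by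
    intro y hy
    exact LinearMap.mem_ker.mpr hy.1
  have hAimg : A = (Subtype.val : K → E) '' (Subtype.val ⁻¹' A) := by
    rw [Set.image_preimage_eq_inter_range, Subtype.range_coe]
    exact (Set.inter_eq_self_of_subset_left hAK).symm
  rw [hAimg, (isometry_subtype_coe).hausdorffMeasure_image (Or.inl hd0)]
  -- compactness of the preimage
  have hclosed : IsClosed A := by
    apply IsClosed.inter
    · exact isClosed_eq (EuclideanSpace.proj (𝕜 := ℝ) i).continuous continuous_const
    · exact isClosed_closedBall
  have hsub : (Subtype.val ⁻¹' A : Set K) ⊆ closedBall 0 (R + ‖v‖) := by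
    intro y hy
    have := hy.2
    rw [mem_closedBall] at this ⊢
    have h1 : dist (y:E) (-v) ≤ R := this
    have : dist (y:E) 0 ≤ R + ‖v‖ := by
      calc dist (y:E) 0 ≤ dist (y:E) (-v) + dist (-v) 0 := dist_triangle _ _ _
        _ ≤ R + ‖v‖ := by
            apply add_le_add h1
            simp [dist_eq_norm]
    simpa [Subtype.dist_eq] using this
  have hcpt : IsCompact (Subtype.val ⁻¹' A : Set K) := by
    apply IsCompact.of_isClosed_subset (isCompact_closedBall (0:K) (R + ‖v‖))
      (hclosed.preimage continuous_subtype_val) hsub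
  -- finrank of the hyperplane
  have hfr : Module.finrank ℝ K = n - 1 := by
    have h1 := LinearMap.finrank_range_add_finrank_ker fl
    have h2 : LinearMap.range fl = ⊤ :=
      LinearMap.range_eq_top.mpr (fun r => ⟨EuclideanSpace.single i r, by
        show (EuclideanSpace.single i r : E) i = r
        rw [EuclideanSpace.single_apply]
        simp⟩)
    rw [h2, finrank_top, finrank_euclideanSpace_fin, Module.finrank_self] at h1
    rw [hK]
    omega
  have hcast : ((n:ℝ) - 1) = ((Module.finrank ℝ K : ℕ) : ℝ) := by
    rw [hfr]
    rw [Nat.cast_sub hn]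
    simp
  rw [hcast]
  exact hcpt.measure_lt_top

lemma euclidean_coord_le_norm {n : ℕ} (x : EuclideanSpace ℝ (Fin n)) (j : Fin n) :
    |x j| ≤ ‖x‖ := by
  rw [EuclideanSpace.norm_eq, ← Real.sqrt_sq_eq_abs]
  apply Real.sqrt_le_sqrt
  have := Finset.single_le_sum (f := fun i => ‖x i‖^2) (fun i _ => sq_nonneg _)
    (Finset.mem_univ j)
  simpa [Real.norm_eq_abs, sq_abs] using this

lemma sphere_hausdorff_lt_top (n : ℕ) (hn : 0 < n) :
    μH[(n:ℝ)-1] (sphere (0 : EuclideanSpace ℝ (Fin n)) 1 : Set (EuclideanSpace ℝ (Fin n))) < ⊤ := by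
  classical
  set E := EuclideanSpace ℝ (Fin n)
  have hd0 : (0:ℝ) ≤ (n:ℝ) - 1 := by
    have : (1:ℝ) ≤ n := by exact_mod_cast hn
    linarith
  have hn' : (0:ℝ) < n := by exact_mod_cast hn
  haveI : Nonempty (Fin n) := ⟨⟨0, hn⟩⟩
  set h : E → E := fun x => ‖x‖⁻¹ • x with hh
  set T : Fin n × Bool → Set E := fun p =>
    {x : E | x p.1 = (if p.2 then (1:ℝ) else -1)} ∩ closedBall 0 (Real.sqrt n) with hT
  have hTsub : ∀ p, T p ⊆ {x : E | 1 ≤ ‖x‖} := by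
    rintro ⟨i, b⟩ x ⟨hx1, -⟩
    have h1 : |x i| = 1 := by
      rcases b with _ | _ <;> simp_all
    have := euclidean_coord_le_norm x i
    rw [h1] at this
    exact this
  have hcover : (sphere (0:E) 1 : Set E) ⊆ ⋃ p : Fin n × Bool, h '' (T p) := by
    intro u hu
    have hnorm : ‖u‖ = 1 := by
      simpa using mem_sphere_zero_iff_norm.mp hu
    have hsumsq : ∑ j, ‖u j‖^2 = 1 := by
      have h1 : ‖u‖ = Real.sqrt (∑ j, ‖u j‖^2) := EuclideanSpace.norm_eq u
      have h2 : Real.sqrt (∑ j, ‖u j‖^2) = 1 := by rw [← h1, hnorm]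
      have h3 : (0:ℝ) ≤ ∑ j, ‖u j‖^2 := Finset.sum_nonneg fun _ _ => sq_nonneg _
      nlinarith [Real.sq_sqrt h3]
    obtain ⟨i, -, hi⟩ := Finset.exists_le_of_sum_le (Finset.univ_nonempty)
      (show ∑ _j : Fin n, (1:ℝ)/n ≤ ∑ j, ‖u j‖^2 by
        rw [hsumsq, Finset.sum_const, Finset.card_univ, Fintype.card_fin, nsmul_eq_mul]
        field_simp; exact le_rfl)
    set t := u i with htdef
    have ht2 : 1/(n:ℝ) ≤ t^2 := by
      simpa [Real.norm_eq_abs, sq_abs] using hi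
    have htne : t ≠ 0 := by
      intro h0
      rw [h0] at ht2
      simp at ht2
      nlinarith
    have htpos : 0 < |t| := abs_pos.mpr htne
    have hts : (Real.sqrt n)⁻¹ ≤ |t| := by
      have h1 : Real.sqrt (1/(n:ℝ)) ≤ Real.sqrt (t^2) := Real.sqrt_le_sqrt ht2
      rw [Real.sqrt_sq_eq_abs] at h1
      rw [show (1:ℝ)/(n:ℝ) = ((n:ℝ))⁻¹ by ring, Real.sqrt_inv] at h1
      exact h1
    have hsq : (0:ℝ) < Real.sqrt n := Real.sqrt_pos.mpr hn'
    refine mem_iUnion.mpr ⟨(i, decide (0 < t)), ?_⟩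
    refine ⟨|t|⁻¹ • u, ⟨?_, ?_⟩, ?_⟩
    · show (|t|⁻¹ • u) i = _
      have hcoord : (|t|⁻¹ • u) i = |t|⁻¹ * t := rfl
      by_cases h0 : 0 < t
      · rw [hcoord, abs_of_pos h0]
        simp [h0, inv_mul_cancel₀ htne]
      · have hneg : t < 0 := lt_of_le_of_ne (not_lt.mp h0) htne
        have hb : decide (0 < t) = false := by simp [h0]
        rw [hcoord, abs_of_neg hneg, hb]
        simp only [Bool.false_eq_true, if_false]
        field_simp
    · rw [mem_closedBall, dist_zero_right]
      have : ‖|t|⁻¹ • u‖ = |t|⁻¹ := by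
        rw [norm_smul, hnorm, mul_one, norm_inv, Real.norm_eq_abs, abs_abs]
      rw [this]
      have h2 := inv_anti₀ (inv_pos.mpr hsq) hts
      rwa [inv_inv] at h2
    · show ‖|t|⁻¹ • u‖⁻¹ • (|t|⁻¹ • u) = u
      have hx : ‖|t|⁻¹ • u‖ = |t|⁻¹ := by
        rw [norm_smul, hnorm, mul_one, norm_inv, Real.norm_eq_abs, abs_abs]
      rw [hx, inv_inv, smul_smul, mul_inv_cancel₀ htpos.ne', one_smul]
  calc μH[(n:ℝ)-1] (sphere (0:E) 1 : Set E)
      ≤ μH[(n:ℝ)-1] (⋃ p : Fin n × Bool, h '' (T p)) := measure_mono hcover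
    _ ≤ ∑' p : Fin n × Bool, μH[(n:ℝ)-1] (h '' (T p)) := measure_iUnion_le _
    _ < ⊤ := by
        rw [tsum_fintype]
        refine ENNReal.sum_lt_top.mpr fun p _ => ?_
        calc μH[(n:ℝ)-1] (h '' (T p))
            ≤ ((2:ℝ≥0) : ℝ≥0∞) ^ ((n:ℝ)-1) * μH[(n:ℝ)-1] (T p) :=
              (normalize_lipschitzOnWith.mono (hTsub p)).hausdorffMeasure_image_le hd0
          _ < ⊤ := ENNReal.mul_lt_top
              (ENNReal.rpow_lt_top_of_nonneg hd0 (by simp))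
              (slice_hausdorff_lt_top n hn p.1 _ _)

/-- The surface (spherical) measure on the unit sphere `S^{n-1} ⊆ ℝⁿ`. -/
noncomputable def sphereσ (n : ℕ) : Measure (sphere (0 : EuclideanSpace ℝ (Fin n)) 1) :=
  μH[(n : ℝ) - 1]

/-- Decomposition identity for the Orlicz harmonic sum `Q = K₁ +̂_φ L₁`:
`φ(1)·Ṽ(Q,K₂,...,Kₙ) = Ṽ_φ(Q,K₁,K₂,...,Kₙ) + Ṽ_φ(Q,L₁,K₂,...,Kₙ)`.
The star bodies `K₂,...,Kₙ` have radial functions `ρ 2, ..., ρ n`. -/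
theorem orlicz_harmonic_sum_decomposition
    (n : ℕ) (hn : 0 < n)
    (φ : ℝ → ℝ)
    (hφconv : ConvexOn ℝ (Ioi 0) φ)
    (hφanti : StrictAntiOn φ (Ioi 0))
    (ρK ρL ρQ : sphere (0 : EuclideanSpace ℝ (Fin n)) 1 → ℝ)
    (ρ : ℕ → (sphere (0 : EuclideanSpace ℝ (Fin n)) 1 → ℝ))
    (hKc : Continuous ρK) (hLc : Continuous ρL) (hQc : Continuous ρQ)
    (hKpos : ∀ u, 0 < ρK u) (hLpos : ∀ u, 0 < ρL u) (hQpos : ∀ u, 0 < ρQ u)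
    (hc : ∀ i, 2 ≤ i → i ≤ n → Continuous (ρ i))
    (hpos : ∀ i, 2 ≤ i → i ≤ n → ∀ u, 0 < ρ i u)
    (hsum : ∀ u, φ (ρK u / ρQ u) + φ (ρL u / ρQ u) = φ 1)
    (Vt VφK VφL : ℝ)
    (hVt : Vt = (1 / n) * ∫ u, ρQ u * ∏ j ∈ Finset.Icc 2 n, ρ j u ∂(sphereσ n))
    (hVφK : VφK = (1 / n) * ∫ u,
      φ (ρK u / ρQ u) * (ρQ u * ∏ j ∈ Finset.Icc 2 n, ρ j u) ∂(sphereσ n))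
    (hVφL : VφL = (1 / n) * ∫ u,
      φ (ρL u / ρQ u) * (ρQ u * ∏ j ∈ Finset.Icc 2 n, ρ j u) ∂(sphereσ n)) :
    φ 1 * Vt = VφK + VφL := by
  have hd0 : (0:ℝ) ≤ (n:ℝ) - 1 := by
    have : (1:ℝ) ≤ n := by exact_mod_cast hn
    linarith
  -- the sphere measure is finite
  haveI hfin : IsFiniteMeasure (sphereσ n) := by
    constructor
    rw [sphereσ]
    have himg := (isometry_subtype_coe
      (s := sphere (0 : EuclideanSpace ℝ (Fin n)) 1)).hausdorffMeasure_image
      (d := (n:ℝ)-1) (Or.inl hd0) Set.univ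
    rw [Set.image_univ, Subtype.range_coe] at himg
    rw [← himg]
    exact sphere_hausdorff_lt_top n hn
  -- continuity of the integrands
  have hQne : ∀ u, ρQ u ≠ 0 := fun u => (hQpos u).ne'
  have hprod : Continuous fun u => ∏ j ∈ Finset.Icc 2 n, ρ j u := by
    apply continuous_finset_prod
    intro j hj
    rw [Finset.mem_Icc] at hj
    exact hc j hj.1 hj.2
  have hX : Continuous fun u => ρQ u * ∏ j ∈ Finset.Icc 2 n, ρ j u := hQc.mul hprod
  have hφcont : ContinuousOn φ (Ioi 0) := hφconv.continuousOn isOpen_Ioi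
  have hfK : Continuous fun u => φ (ρK u / ρQ u) :=
    hφcont.comp_continuous (hKc.div hQc hQne) fun u =>
      mem_Ioi.mpr (div_pos (hKpos u) (hQpos u))
  have hfL : Continuous fun u => φ (ρL u / ρQ u) :=
    hφcont.comp_continuous (hLc.div hQc hQne) fun u =>
      mem_Ioi.mpr (div_pos (hLpos u) (hQpos u))
  -- integrability
  have hint : ∀ {f : sphere (0 : EuclideanSpace ℝ (Fin n)) 1 → ℝ}, Continuous f →
      Integrable f (sphereσ n) := by
    intro f hf
    apply hf.integrable_of_hasCompactSupport
    exact IsCompact.of_isClosed_subset isCompact_univ (isClosed_tsupport f) (Set.subset_univ _)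
  have hIK : Integrable (fun u => φ (ρK u / ρQ u) *
      (ρQ u * ∏ j ∈ Finset.Icc 2 n, ρ j u)) (sphereσ n) := hint (hfK.mul hX)
  have hIL : Integrable (fun u => φ (ρL u / ρQ u) *
      (ρQ u * ∏ j ∈ Finset.Icc 2 n, ρ j u)) (sphereσ n) := hint (hfL.mul hX)
  -- the pointwise identity and conclusion
  have hkey : (∫ u, φ (ρK u / ρQ u) * (ρQ u * ∏ j ∈ Finset.Icc 2 n, ρ j u) ∂(sphereσ n))
      + (∫ u, φ (ρL u / ρQ u) * (ρQ u * ∏ j ∈ Finset.Icc 2 n, ρ j u) ∂(sphereσ n))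
      = φ 1 * ∫ u, ρQ u * ∏ j ∈ Finset.Icc 2 n, ρ j u ∂(sphereσ n) := by
    rw [← integral_add hIK hIL, ← MeasureTheory.integral_const_mul]
    refine integral_congr_ae (Filter.Eventually.of_forall fun u => ?_)
    show φ (ρK u / ρQ u) * _ + φ (ρL u / ρQ u) * _ = φ 1 * _
    rw [← add_mul, hsum u]
  rw [hVt, hVφK, hVφL]
  rw [← mul_add, hkey]
  ring
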